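/- arXiv:2312.14986 — 2 statements merged into one kernel-verified Lean document; each statement's English description precedes it below -/
import Mathlib

section
/- Let L be a finite set of lines in ℝ³ (or ℝ⁴) and X a finite set of irreducible algebraic surfaces of degree at most D, such that each surface in X contains at least A lines of L, any two distinct surfaces in X share at most D² common lines, and A > 2D·|L|^{1/2}. Then |X| ≤ 2|L|/A. -/
lemma key {Line Surface : Type*} [DecidableEq Line] [DecidableEq Surface]
    (f : Surface → Finset Line) (S : Finset Surface) :
    2 * ∑ x ∈ S, (f x).card ≤
      2 * (S.biUnion f).card +
        ∑ x ∈ S, ∑ y ∈ S, if x = y then 0 else (f x ∩ f y).card := by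
  classical
  induction S using Finset.cons_induction with
  | empty => simp
  | cons a S ha ih =>
    have hbU : (Finset.cons a S ha).biUnion f = f a ∪ S.biUnion f := by
      simp [Finset.cons_eq_insert]
    have hcap : (f a ∩ S.biUnion f).card ≤ ∑ y ∈ S, (f a ∩ f y).card := by
      rw [Finset.inter_biUnion]
      exact Finset.card_biUnion_le
    have hcard : (f a ∪ S.biUnion f).card + (f a ∩ S.biUnion f).card
        = (f a).card + (S.biUnion f).card := Finset.card_union_add_card_inter _ _
    have hdd : ∑ x ∈ Finset.cons a S ha, ∑ y ∈ Finset.cons a S ha,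
          (if x = y then 0 else (f x ∩ f y).card)
        = (∑ x ∈ S, ∑ y ∈ S, if x = y then 0 else (f x ∩ f y).card)
          + 2 * ∑ y ∈ S, (f a ∩ f y).card := by
      rw [Finset.sum_cons]
      have h1 : ∑ y ∈ Finset.cons a S ha, (if a = y then 0 else (f a ∩ f y).card)
          = ∑ y ∈ S, (f a ∩ f y).card := by
        rw [Finset.sum_cons, if_pos rfl]
        simp only [zero_add]
        refine Finset.sum_congr rfl fun y hy => ?_
        rw [if_neg]; rintro rfl; exact ha hy
      have h2 : ∀ x ∈ S, ∑ y ∈ Finset.cons a S ha,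
            (if x = y then 0 else (f x ∩ f y).card)
          = (f a ∩ f x).card + ∑ y ∈ S, (if x = y then 0 else (f x ∩ f y).card) := by
        intro x hx
        rw [Finset.sum_cons, if_neg (by rintro rfl; exact ha hx), Finset.inter_comm]
      rw [h1, Finset.sum_congr rfl h2, Finset.sum_add_distrib]
      ring
    rw [Finset.sum_cons, hbU, hdd]
    omega

/-- Surface-counting lemma (Guth): if each surface in `X` contains at least `A`
lines of `L`, any two distinct surfaces share at most `D²` lines, and
`A > 2·D·|L|^{1/2}`, then `|X| ≤ 2|L|/A`. -/
theorem stmt_0 {Line Surface : Type*} [DecidableEq Line]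
    (L : Finset Line) (X : Finset Surface)
    (linesIn : Surface → Finset Line)
    (D A : ℝ) (hD : 1 ≤ D) (hA : 0 < A)
    (hsub : ∀ x ∈ X, linesIn x ⊆ L)
    (hmany : ∀ x ∈ X, (A : ℝ) ≤ ((linesIn x).card : ℝ))
    (hshare : ∀ x ∈ X, ∀ x' ∈ X, x ≠ x' →
      (((linesIn x ∩ linesIn x').card : ℝ) ≤ D ^ 2))
    (hAbig : 2 * D * Real.sqrt (L.card : ℝ) < A) :
    (X.card : ℝ) ≤ 2 * (L.card : ℝ) / A := by
  classical
  by_contra hcon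
  push_neg at hcon
  set ℓ : ℝ := (L.card : ℝ) with hℓ
  have hℓ0 : 0 ≤ ℓ := by positivity
  set s : ℝ := Real.sqrt ℓ with hs
  have hs0 : 0 ≤ s := Real.sqrt_nonneg _
  have hs2 : s ^ 2 = ℓ := Real.sq_sqrt hℓ0
  -- X is nonempty
  have hXne : X.Nonempty := by
    have h0 : (0:ℝ) < (X.card : ℝ) := lt_of_le_of_lt (by positivity) hcon
    exact Finset.card_pos.mp (by exact_mod_cast h0)
  obtain ⟨x0, hx0⟩ := hXne
  have hAℓ : A ≤ ℓ := le_trans (hmany x0 hx0)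
    (by exact_mod_cast Nat.cast_le.mpr (Finset.card_le_card (hsub x0 hx0)))
  have hsD : 2 * D < s := by
    have h1 : 2 * D * s < s ^ 2 := lt_of_lt_of_le hAbig (hs2 ▸ hAℓ)
    have hspos : 0 < s := by
      rcases lt_or_eq_of_le hs0 with h | h
      · exact h
      · exfalso; nlinarith
    nlinarith
  have hspos : 0 < s := by linarith
  -- choose k
  set k : ℕ := ⌊2 * ℓ / A⌋₊ + 1 with hk
  have hdiv0 : 0 ≤ 2 * ℓ / A := by positivity
  have hkX : k ≤ X.card := by
    have : ⌊2 * ℓ / A⌋₊ < X.card := (Nat.floor_lt hdiv0).mpr hcon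
    omega
  have hk1 : 2 * ℓ / A < (k : ℝ) := by
    rw [hk]; push_cast; exact Nat.lt_floor_add_one _
  have hk2 : ((k : ℝ) - 1) ≤ 2 * ℓ / A := by
    rw [hk]; push_cast; simpa using Nat.floor_le hdiv0
  have hkA : 2 * ℓ < (k : ℝ) * A := by
    rw [div_lt_iff₀ hA] at hk1; linarith
  have hk2' : ((k : ℝ) - 1) * A ≤ 2 * ℓ := by
    rw [← le_div_iff₀ hA]; exact hk2
  -- extract a subset of size k
  obtain ⟨S, hSX, hScard⟩ := Finset.exists_subset_card_eq hkX
  -- apply key lemma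
  have hkey := key linesIn S
  -- cast to ℝ
  have hkeyR : 2 * ∑ x ∈ S, ((linesIn x).card : ℝ) ≤
      2 * ((S.biUnion linesIn).card : ℝ) +
        ∑ x ∈ S, ∑ y ∈ S, (if x = y then 0 else ((linesIn x ∩ linesIn y).card : ℝ)) := by
    have := hkey
    push_cast
    exact_mod_cast this
  -- lower bound sum of cards
  have hlow : (k : ℝ) * A ≤ ∑ x ∈ S, ((linesIn x).card : ℝ) := by
    calc (k : ℝ) * A = ∑ _x ∈ S, A := by rw [Finset.sum_const, hScard, nsmul_eq_mul, mul_comm]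
    _ ≤ _ := Finset.sum_le_sum fun x hx => hmany x (hSX hx)
  -- union bound
  have hunion : ((S.biUnion linesIn).card : ℝ) ≤ ℓ := by
    have : S.biUnion linesIn ⊆ L := Finset.biUnion_subset.mpr fun x hx => hsub x (hSX hx)
    exact_mod_cast Nat.cast_le.mpr (Finset.card_le_card this)
  -- double-sum upper bound
  have hdd : ∑ x ∈ S, ∑ y ∈ S, (if x = y then 0 else ((linesIn x ∩ linesIn y).card : ℝ))
      ≤ (k : ℝ) * ((k : ℝ) - 1) * D ^ 2 := by
    have hterm : ∀ x ∈ S, ∑ y ∈ S, (if x = y then 0 else ((linesIn x ∩ linesIn y).card : ℝ))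
        ≤ ((k : ℝ) - 1) * D ^ 2 := by
      intro x hx
      have : ∑ y ∈ S, (if x = y then 0 else ((linesIn x ∩ linesIn y).card : ℝ))
          ≤ ∑ y ∈ S, (if x = y then 0 else D ^ 2) := by
        refine Finset.sum_le_sum fun y hy => ?_
        by_cases h : x = y
        · simp [h]
        · simp only [if_neg h]
          exact hshare x (hSX hx) y (hSX hy) h
      refine le_trans this ?_
      have heq : (∑ y ∈ S, if x = y then 0 else D ^ 2)
          = (S.card : ℝ) * D ^ 2 - D ^ 2 := by
        have hc : ∀ y ∈ S, (if x = y then (0:ℝ) else D ^ 2)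
            = D ^ 2 - (if x = y then D ^ 2 else 0) := by
          intro y _; split_ifs <;> ring
        rw [Finset.sum_congr rfl hc, Finset.sum_sub_distrib, Finset.sum_const,
          Finset.sum_ite_eq, if_pos hx, nsmul_eq_mul]
      rw [heq, hScard]
      exact le_of_eq (by ring)
    calc _ ≤ ∑ _x ∈ S, (((k : ℝ) - 1) * D ^ 2) := Finset.sum_le_sum hterm
    _ = (k : ℝ) * (((k : ℝ) - 1) * D ^ 2) := by rw [Finset.sum_const, hScard]; push_cast; ring
    _ = _ := by ring
  -- combine
  have hmain : 2 * ((k : ℝ) * A) ≤ 2 * ℓ + (k : ℝ) * ((k : ℝ) - 1) * D ^ 2 := by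
    linarith
  -- final contradiction
  have hk1' : (0 : ℝ) ≤ (k : ℝ) - 1 := by
    have : (1 : ℕ) ≤ k := by omega
    have : (1 : ℝ) ≤ (k : ℝ) := by exact_mod_cast this
    linarith
  have hD0 : (0 : ℝ) < D := by linarith
  have hstep : ((k : ℝ) - 1) * D ≤ s := by
    have h1 : ((k : ℝ) - 1) * (2 * D * s) ≤ ((k : ℝ) - 1) * A :=
      mul_le_mul_of_nonneg_left (le_of_lt hAbig) hk1'
    nlinarith
  nlinarith [mul_le_mul_of_nonneg_right hstep (le_of_lt hD0), sq_nonneg ((k:ℝ) - 1)]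
end

section
/- If Q₁ and Q₂ are nonzero polynomials in ℝ[x,y] with no common irreducible factor, then their common zero set Z(Q₁) ∩ Z(Q₂) ⊆ ℝ² contains at most (deg Q₁)·(deg Q₂) points. -/
open MvPolynomial AddMonoidAlgebra

namespace BezoutReal


noncomputable section

/-- degree-lex weight -/
def dlex (n : Fin 2 →₀ ℕ) : ℕ ×ₗ ℕ := toLex (n 0 + n 1, n 0)

lemma dlex_add (a b : Fin 2 →₀ ℕ) : dlex (a + b) = dlex a + dlex b := by
  unfold dlex
  simp only [Finsupp.add_apply]
  change toLex _ = toLex ((a 0 + a 1, a 0) + (b 0 + b 1, b 0))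
  simp [Prod.ext_iff]
  omega

lemma dlex_inj : Function.Injective dlex := by
  intro a b h
  unfold dlex at h
  have h' : (a 0 + a 1, a 0) = (b 0 + b 1, b 0) := toLex.injective h
  simp [Prod.ext_iff] at h'
  ext i
  match i with
  | 0 => omega
  | 1 => omega

lemma weight_eq (m : Fin 2 →₀ ℕ) : (m.sum fun _ e => e) = m 0 + m 1 := by
  rw [Finsupp.sum_fintype]
  · exact Fin.sum_univ_two _
  · intro; rfl

lemma totalDegree_eq_dlex_fst {p : MvPolynomial (Fin 2) ℝ} (hp : p ≠ 0) :
    p.totalDegree = (ofLex (supDegree dlex p)).1 := by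
  obtain ⟨a, ha, he⟩ := exists_supDegree_mem_support dlex hp
  rw [he]
  apply le_antisymm
  · apply Finset.sup_le
    intro m hm
    have hle : dlex m ≤ dlex a := he ▸ Finset.le_sup (f := dlex) hm
    rw [weight_eq]
    rcases Prod.Lex.le_iff.mp hle with h | ⟨h1, _⟩
    · exact le_of_lt h
    · exact le_of_eq h1
  · have := MvPolynomial.le_totalDegree (p := p) ha
    rw [weight_eq] at this
    exact this

lemma totalDegree_mul_eq {p q : MvPolynomial (Fin 2) ℝ} (hp : p ≠ 0) (hq : q ≠ 0) :
    (p * q).totalDegree = p.totalDegree + q.totalDegree := by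
  have hpq : p * q ≠ 0 := mul_ne_zero hp hq
  have hs := supDegree_mul (D := dlex) dlex_inj dlex_add
    (mul_ne_zero ((leadingCoeff_ne_zero dlex_inj).mpr hp)
      ((leadingCoeff_ne_zero dlex_inj).mpr hq)) hp hq
  rw [totalDegree_eq_dlex_fst hpq, totalDegree_eq_dlex_fst hp, totalDegree_eq_dlex_fst hq, hs]
  rfl

end

noncomputable section

def G (m : ℕ) : Finset (ℕ × ℕ) := (Finset.range (m + 1)).biUnion fun k => Finset.HasAntidiagonal.antidiagonal k

lemma mem_G {m : ℕ} (p : ℕ × ℕ) : p ∈ G m ↔ p.1 + p.2 ≤ m := by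
  simp [G, Finset.mem_biUnion, Finset.HasAntidiagonal.mem_antidiagonal, Nat.lt_succ_iff]

lemma card_G (m : ℕ) : 2 * (G m).card = (m + 1) * (m + 2) := by
  have hd : ∀ x ∈ Finset.range (m+1), ∀ y ∈ Finset.range (m+1), x ≠ y →
      Disjoint (Finset.HasAntidiagonal.antidiagonal x) (Finset.HasAntidiagonal.antidiagonal y) := by
    intro x _ y _ hxy
    rw [Finset.disjoint_left]
    intro p hp hp'
    rw [Finset.HasAntidiagonal.mem_antidiagonal] at hp hp'
    exact hxy (hp ▸ hp')
  rw [G, Finset.card_biUnion hd]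
  simp only [Finset.Nat.card_antidiagonal]
  have h1 : (∑ k ∈ Finset.range (m+1), (k+1)) = ∑ i ∈ Finset.range (m+2), i := by
    rw [Finset.sum_range_succ' (fun i => i) (m+1)]
    simp
  rw [h1, mul_comm]
  rw [Finset.sum_range_id_mul_two (m+2)]
  simp [mul_comm]

local notation "g" m => Module.finrank ℝ (restrictTotalDegree (Fin 2) ℝ m)

def degSet (m : ℕ) : Set (Fin 2 →₀ ℕ) := {n | (n.sum fun _ e => e) ≤ m}

lemma weight_eq' (m : Fin 2 →₀ ℕ) : (m.sum fun _ e => e) = m 0 + m 1 := by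
  rw [Finsupp.sum_fintype]
  · exact Fin.sum_univ_two _
  · intro; rfl

def degSetEquiv (m : ℕ) : degSet m ≃ {x : ℕ × ℕ // x.1 + x.2 ≤ m} where
  toFun n := ⟨(n.1 0, n.1 1), by have := n.2; simp only [degSet, Set.mem_setOf_eq, weight_eq'] at this; exact this⟩
  invFun x := ⟨Finsupp.equivFunOnFinite.symm ![x.1.1, x.1.2], by
    simp only [degSet, Set.mem_setOf_eq, weight_eq']
    simpa using x.2⟩
  left_inv n := by
    ext i
    simp only [Finsupp.coe_equivFunOnFinite_symm]
    match i with
    | 0 => rfl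
    | 1 => rfl
  right_inv x := by
    ext <;> simp

instance (m : ℕ) : Fintype {x : ℕ × ℕ // x.1 + x.2 ≤ m} :=
  Fintype.subtype (G m) mem_G

instance degSetFintype (m : ℕ) : Fintype (degSet m) :=
  Fintype.ofEquiv _ (degSetEquiv m).symm

lemma finrank_restrict (m : ℕ) :
    Module.finrank ℝ (restrictTotalDegree (Fin 2) ℝ m) = (G m).card := by
  have hrw : restrictTotalDegree (Fin 2) ℝ m = restrictSupport ℝ (degSet m) := rfl
  rw [hrw, Module.finrank_eq_card_basis (basisRestrictSupport ℝ (degSet m))]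
  rw [Fintype.card_congr (degSetEquiv m)]
  exact Fintype.card_of_subtype (G m) mem_G

lemma two_finrank_restrict (m : ℕ) :
    2 * Module.finrank ℝ (restrictTotalDegree (Fin 2) ℝ m) = (m + 1) * (m + 2) := by
  rw [finrank_restrict, card_G]

end

noncomputable section

/-- a linear-ish factor separating q from p -/
def sepFactor (p q : Fin 2 → ℝ) : MvPolynomial (Fin 2) ℝ :=
  if h : q = p then 1 else
    X (Function.ne_iff.mp h).choose - C (q (Function.ne_iff.mp h).choose)

lemma sepFactor_degree (p q : Fin 2 → ℝ) : (sepFactor p q).totalDegree ≤ 1 := by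
  unfold sepFactor
  split_ifs with h
  · simp
  · rw [sub_eq_add_neg, ← map_neg C]
    refine le_trans (totalDegree_add _ _) ?_
    simp [totalDegree_X, totalDegree_C]

lemma sepFactor_eval_self (p q : Fin 2 → ℝ) (h : q ≠ p) : eval q (sepFactor p q) = 0 := by
  unfold sepFactor
  rw [dif_neg h]
  simp

lemma sepFactor_eval_p (p q : Fin 2 → ℝ) (h : q ≠ p) : eval p (sepFactor p q) ≠ 0 := by
  unfold sepFactor
  rw [dif_neg h]
  simp only [map_sub, eval_X, eval_C]
  have := (Function.ne_iff.mp h).choose_spec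
  exact sub_ne_zero.mpr (Ne.symm this)

def lagPoly (T : Finset (Fin 2 → ℝ)) (p : Fin 2 → ℝ) : MvPolynomial (Fin 2) ℝ :=
  ∏ q ∈ T.erase p, sepFactor p q

lemma lagPoly_degree (T : Finset (Fin 2 → ℝ)) (p : Fin 2 → ℝ) :
    (lagPoly T p).totalDegree ≤ T.card := by
  refine le_trans (totalDegree_finset_prod _ _) ?_
  refine le_trans (Finset.sum_le_card_nsmul _ _ 1 fun q _ => sepFactor_degree p q) ?_
  simp only [smul_eq_mul, mul_one]
  exact le_trans (Finset.card_erase_le) le_rfl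

lemma lagPoly_eval_ne (T : Finset (Fin 2 → ℝ)) (p q : Fin 2 → ℝ) (hq : q ∈ T.erase p) :
    eval q (lagPoly T p) = 0 := by
  unfold lagPoly
  rw [map_prod]
  exact Finset.prod_eq_zero hq (sepFactor_eval_self p q (Finset.ne_of_mem_erase hq))

lemma lagPoly_eval_self (T : Finset (Fin 2 → ℝ)) (p : Fin 2 → ℝ) :
    eval p (lagPoly T p) ≠ 0 := by
  unfold lagPoly
  rw [map_prod]
  rw [Finset.prod_ne_zero_iff]
  exact fun q hq => sepFactor_eval_p p q (Finset.ne_of_mem_erase hq)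

lemma exists_interpolation (T : Finset (Fin 2 → ℝ)) (f : (Fin 2 → ℝ) → ℝ) :
    ∃ P : MvPolynomial (Fin 2) ℝ, P.totalDegree ≤ T.card ∧ ∀ p ∈ T, eval p P = f p := by
  refine ⟨∑ p ∈ T, (f p / eval p (lagPoly T p)) • lagPoly T p, ?_, ?_⟩
  · refine le_trans (totalDegree_finset_sum _ _) ?_
    refine Finset.sup_le fun p _ => le_trans (totalDegree_smul_le _ _) (lagPoly_degree T p)
  · intro p hp
    rw [map_sum]
    rw [Finset.sum_eq_single p]
    · rw [smul_eq_C_mul, map_mul, eval_C]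
      exact div_mul_cancel₀ _ (lagPoly_eval_self T p)
    · intro q hq hqp
      rw [smul_eq_C_mul, map_mul, eval_C, lagPoly_eval_ne T q p (Finset.mem_erase.mpr ⟨hqp.symm, hp⟩),
        mul_zero]
    · intro h; exact absurd hp h

end

noncomputable section


/-- evaluation at a point as a linear map -/
def evalLM (p : Fin 2 → ℝ) : MvPolynomial (Fin 2) ℝ →ₗ[ℝ] ℝ where
  toFun := eval p
  map_add' x y := map_add _ _ _
  map_smul' c x := by simp [smul_eq_C_mul]

set_option maxHeartbeats 1000000 in
set_option synthInstance.maxHeartbeats 400000 in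
lemma key (Q₁ Q₂ : MvPolynomial (Fin 2) ℝ) (h₁ : Q₁ ≠ 0) (h₂ : Q₂ ≠ 0)
    (hcop : ∀ r : MvPolynomial (Fin 2) ℝ, Irreducible r → r ∣ Q₁ → ¬ r ∣ Q₂)
    (T : Finset (Fin 2 → ℝ)) (hT : ∀ p ∈ T, eval p Q₁ = 0 ∧ eval p Q₂ = 0) :
    T.card ≤ Q₁.totalDegree * Q₂.totalDegree := by
  classical
  set d₁ := Q₁.totalDegree with hd₁
  set d₂ := Q₂.totalDegree with hd₂
  set a := T.card with ha
  set V : Submodule ℝ (MvPolynomial (Fin 2) ℝ) := restrictTotalDegree (Fin 2) ℝ (a + d₁ + d₂) with hV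
  set V₁ : Submodule ℝ (MvPolynomial (Fin 2) ℝ) := restrictTotalDegree (Fin 2) ℝ (a + d₂) with hV₁
  set V₂ : Submodule ℝ (MvPolynomial (Fin 2) ℝ) := restrictTotalDegree (Fin 2) ℝ (a + d₁) with hV₂
  set V₃ : Submodule ℝ (MvPolynomial (Fin 2) ℝ) := restrictTotalDegree (Fin 2) ℝ a with hV₃
  -- the evaluation map
  set ev : V →ₗ[ℝ] (T → ℝ) := LinearMap.pi (fun q => evalLM q.1 ∘ₗ V.subtype) with hev
  have hsurj : Function.Surjective ev := by
    intro f
    obtain ⟨P, hPd, hPe⟩ := exists_interpolation T (fun x => if h : x ∈ T then f ⟨x, h⟩ else 0)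
    refine ⟨⟨P, ?_⟩, ?_⟩
    · rw [mem_restrictTotalDegree]
      omega
    · funext q
      have := hPe q.1 q.2
      rw [dif_pos q.2] at this
      exact this
  -- the multiplication map φ
  set φ₀ : (↥V₁ × ↥V₂) →ₗ[ℝ] MvPolynomial (Fin 2) ℝ :=
    (LinearMap.mulRight ℝ Q₁ ∘ₗ V₁.subtype ∘ₗ LinearMap.fst ℝ ↥V₁ ↥V₂)
      + (LinearMap.mulRight ℝ Q₂ ∘ₗ V₂.subtype ∘ₗ LinearMap.snd ℝ ↥V₁ ↥V₂) with hφ₀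
  have hφ₀apply : ∀ x : ↥V₁ × ↥V₂, φ₀ x = x.1.1 * Q₁ + x.2.1 * Q₂ := fun x => rfl
  have hφ₀mem : ∀ x : ↥V₁ × ↥V₂, φ₀ x ∈ V := by
    intro x
    rw [hφ₀apply]
    apply add_mem
    · rw [mem_restrictTotalDegree]
      have h1 := totalDegree_mul x.1.1 Q₁
      have h2 := (mem_restrictTotalDegree _ _ _).mp x.1.2
      omega
    · rw [mem_restrictTotalDegree]
      have h1 := totalDegree_mul x.2.1 Q₂
      have h2 := (mem_restrictTotalDegree _ _ _).mp x.2.2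
      omega
  set φ : (↥V₁ × ↥V₂) →ₗ[ℝ] ↥V := φ₀.codRestrict V hφ₀mem with hφ
  -- the syzygy map ψ
  have hψ₁mem : ∀ C : ↥V₃, (LinearMap.mulRight ℝ Q₂ ∘ₗ V₃.subtype) C ∈ V₁ := by
    intro C
    rw [mem_restrictTotalDegree]
    have h1 := totalDegree_mul C.1 Q₂
    have h2 := (mem_restrictTotalDegree _ _ _).mp C.2
    simp only [LinearMap.coe_comp, Function.comp_apply, Submodule.coe_subtype,
      LinearMap.mulRight_apply]
    omega
  have hψ₂mem : ∀ C : ↥V₃, ((-(LinearMap.mulRight ℝ Q₁)) ∘ₗ V₃.subtype) C ∈ V₂ := by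
    intro C
    rw [mem_restrictTotalDegree]
    have h1 := totalDegree_mul C.1 Q₁
    have h2 := (mem_restrictTotalDegree _ _ _).mp C.2
    simp only [LinearMap.coe_comp, Function.comp_apply, Submodule.coe_subtype, LinearMap.neg_apply,
      LinearMap.mulRight_apply, totalDegree_neg]
    omega
  set ψ : ↥V₃ →ₗ[ℝ] (↥V₁ × ↥V₂) :=
    LinearMap.prod ((LinearMap.mulRight ℝ Q₂ ∘ₗ V₃.subtype).codRestrict V₁ hψ₁mem)
      (((-(LinearMap.mulRight ℝ Q₁)) ∘ₗ V₃.subtype).codRestrict V₂ hψ₂mem) with hψ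
  have hψapply : ∀ C : ↥V₃, ((ψ C).1.1 = C.1 * Q₂ ∧ (ψ C).2.1 = -(C.1 * Q₁)) := by
    intro C
    constructor <;> rfl
  have hψinj : Function.Injective ψ := by
    intro C C' h
    have h1 : (ψ C).1.1 = (ψ C').1.1 := by rw [h]
    rw [(hψapply C).1, (hψapply C').1] at h1
    exact Subtype.ext (mul_right_cancel₀ h₂ h1)
  have hker : LinearMap.ker φ = LinearMap.range ψ := by
    ext x
    rw [LinearMap.mem_ker, LinearMap.mem_range]
    constructor
    · intro hx0
      have hx : x.1.1 * Q₁ + x.2.1 * Q₂ = 0 := by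
        have : (φ x : MvPolynomial (Fin 2) ℝ) = 0 := by rw [hx0]; rfl
        rwa [hφ, LinearMap.codRestrict_apply, hφ₀apply] at this
      have hdvd : Q₂ ∣ x.1.1 := by
        refine UniqueFactorizationMonoid.dvd_of_dvd_mul_right_of_no_prime_factors h₂
          (fun hdQ₂ hdQ₁ hprime => hcop _ hprime.irreducible hdQ₁ hdQ₂) ?_
        exact ⟨-x.2.1, by linear_combination hx⟩
      obtain ⟨Cp, hCp⟩ := hdvd
      have hCmem : Cp ∈ V₃ := by
        by_cases hC0 : Cp = 0
        · rw [hC0]; exact zero_mem _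
        · rw [mem_restrictTotalDegree]
          have hdeg : x.1.1.totalDegree = d₂ + Cp.totalDegree := by
            rw [hCp, totalDegree_mul_eq h₂ hC0]
          have h2 := (mem_restrictTotalDegree _ _ _).mp x.1.2
          omega
      have hB : x.2.1 = -(Cp * Q₁) := by
        have hq : Q₂ * (Cp * Q₁ + x.2.1) = 0 := by linear_combination hx - Q₁ * hCp
        rcases mul_eq_zero.mp hq with h | h
        · exact absurd h h₂
        · linear_combination h
      refine ⟨⟨Cp, hCmem⟩, ?_⟩
      have hA : (ψ ⟨Cp, hCmem⟩).1.1 = x.1.1 := by rw [(hψapply _).1, hCp]; ring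
      have hB' : (ψ ⟨Cp, hCmem⟩).2.1 = x.2.1 := by rw [(hψapply _).2, hB]
      exact Prod.ext (Subtype.ext hA) (Subtype.ext hB')
    · rintro ⟨C, rfl⟩
      apply Subtype.ext
      show (φ₀ (ψ C) : MvPolynomial (Fin 2) ℝ) = 0
      rw [hφ₀apply, (hψapply C).1, (hψapply C).2]
      ring
  have hrange : LinearMap.range φ ≤ LinearMap.ker ev := by
    rintro y ⟨x, rfl⟩
    rw [LinearMap.mem_ker]
    funext q
    show (evalLM q.1 ∘ₗ V.subtype) (φ x) = 0
    have : (φ x : MvPolynomial (Fin 2) ℝ) = x.1.1 * Q₁ + x.2.1 * Q₂ := by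
      rw [hφ, LinearMap.codRestrict_apply, hφ₀apply]
    simp only [LinearMap.coe_comp, Function.comp_apply, Submodule.coe_subtype, this]
    show eval q.1 (x.1.1 * Q₁ + x.2.1 * Q₂) = 0
    rw [map_add, map_mul, map_mul, (hT q.1 q.2).1, (hT q.1 q.2).2, mul_zero, mul_zero, add_zero]
  -- rank computations
  have e1 : Module.finrank ℝ (LinearMap.range ev) + Module.finrank ℝ (LinearMap.ker ev)
      = Module.finrank ℝ V := LinearMap.finrank_range_add_finrank_ker ev
  rw [LinearMap.range_eq_top.mpr hsurj, finrank_top] at e1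
  have hfrT : Module.finrank ℝ (↥T → ℝ) = a := by
    rw [Module.finrank_pi, Fintype.card_coe]
  rw [hfrT] at e1
  have e2 : Module.finrank ℝ (LinearMap.range φ) + Module.finrank ℝ (LinearMap.ker φ)
      = Module.finrank ℝ V₁ + Module.finrank ℝ V₂ := by
    rw [LinearMap.finrank_range_add_finrank_ker φ, Module.finrank_prod]
  have e3 : Module.finrank ℝ (LinearMap.ker φ) = Module.finrank ℝ V₃ := by
    rw [hker]
    exact ((LinearEquiv.ofInjective ψ hψinj).finrank_eq).symm
  have e4 : Module.finrank ℝ (LinearMap.range φ) ≤ Module.finrank ℝ (LinearMap.ker ev) :=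
    Submodule.finrank_mono hrange
  have g1 := two_finrank_restrict (a + d₁ + d₂)
  have g2 := two_finrank_restrict (a + d₂)
  have g3 := two_finrank_restrict (a + d₁)
  have g4 := two_finrank_restrict a
  rw [e3] at e2
  -- combine
  nlinarith [e1, e2, e4, g1, g2, g3, g4]

end

end BezoutReal

open MvPolynomial

/-- Bézout in ℝ²: two nonzero coprime polynomials (no common irreducible
factor) have at most `deg Q₁ · deg Q₂` common real zeros. -/
theorem stmt_3 (Q₁ Q₂ : MvPolynomial (Fin 2) ℝ)
    (h₁ : Q₁ ≠ 0) (h₂ : Q₂ ≠ 0)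
    (hcop : ∀ r : MvPolynomial (Fin 2) ℝ, Irreducible r → r ∣ Q₁ → ¬ r ∣ Q₂) :
    {p : Fin 2 → ℝ | eval p Q₁ = 0 ∧ eval p Q₂ = 0}.Finite ∧
    {p : Fin 2 → ℝ | eval p Q₁ = 0 ∧ eval p Q₂ = 0}.ncard ≤
      Q₁.totalDegree * Q₂.totalDegree := by
  classical
  have hfin : {p : Fin 2 → ℝ | eval p Q₁ = 0 ∧ eval p Q₂ = 0}.Finite := by
    by_contra hinf
    rw [← Set.not_infinite, not_not] at hinf
    obtain ⟨T, hTs, hTc⟩ :=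
      hinf.exists_subset_card_eq (Q₁.totalDegree * Q₂.totalDegree + 1)
    have := BezoutReal.key Q₁ Q₂ h₁ h₂ hcop T (fun p hp => hTs hp)
    omega
  refine ⟨hfin, ?_⟩
  have := BezoutReal.key Q₁ Q₂ h₁ h₂ hcop hfin.toFinset
    (fun p hp => hfin.mem_toFinset.mp hp)
  rwa [Set.ncard_eq_toFinset_card _ hfin]
end
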